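/- Let s be a complex number and α a real number such that s ∉ {−1, 0, 1}, s + iα ∉ {−1, 0, 1}, ζ(−s) ≠ 0, and the quantity D = −2πi·tanh(πα/2)·ζ(s+iα)·ζ(−s−iα) + (s+iα)·ζ(1+s+iα)·ζ(1−s−iα) is nonzero. Then ζ(s) = s·ζ(1−s)·ζ(1+s)·[ i·(s+iα)·tanh(πα/2)·ζ(1−s−iα)·ζ(1+s+iα) + 2π·ζ(s+iα)·ζ(−s−iα) ] / ( 2π·ζ(−s)·D ). -/

import Mathlib

open Complex

lemma zetaE (z : ℂ) (h0 : z ≠ 0) (h1 : z ≠ 1) (hm1 : z ≠ -1) :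
    2 * (Real.pi : ℂ) * Complex.cos ((Real.pi : ℂ) * z / 2) * riemannZeta z * riemannZeta (-z) =
      -z * Complex.sin ((Real.pi : ℂ) * z / 2) * riemannZeta (1 - z) * riemannZeta (1 + z) := by
  have hneg : -z ≠ 0 := neg_ne_zero.mpr h0
  have hz1 : (1 : ℂ) - z ≠ 0 := sub_ne_zero.mpr (Ne.symm h1)
  have hz2 : (1 : ℂ) + z ≠ 0 := by
    intro h; apply hm1; linear_combination h
  have hΛ1 : completedRiemannZeta (1 - z) = completedRiemannZeta z :=
    completedRiemannZeta_one_sub z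
  have hΛ2 : completedRiemannZeta (1 + z) = completedRiemannZeta (-z) := by
    rw [show (1 : ℂ) + z = 1 - -z by ring, completedRiemannZeta_one_sub]
  rw [riemannZeta_def_of_ne_zero h0, riemannZeta_def_of_ne_zero hneg,
    riemannZeta_def_of_ne_zero hz1, riemannZeta_def_of_ne_zero hz2, hΛ1, hΛ2]
  set L := completedRiemannZeta z with hL
  set M := completedRiemannZeta (-z) with hM
  rcases eq_or_ne L 0 with h | hLne
  · simp [h]
  rcases eq_or_ne M 0 with h | hMne
  · simp [h]
  by_cases hcos : Complex.cos ((Real.pi : ℂ) * z / 2) = 0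
  · have h := Gammaℝ_one_sub_mul_Gammaℝ_one_add z
    rw [hcos, inv_zero] at h
    rcases mul_eq_zero.mp h with h' | h' <;> rw [h'] <;> simp [hcos]
  by_cases hsin : Complex.sin ((Real.pi : ℂ) * z / 2) = 0
  · obtain ⟨k, hk⟩ := Complex.sin_eq_zero_iff.mp hsin
    have hpi : (Real.pi : ℂ) ≠ 0 := ofReal_ne_zero.mpr Real.pi_ne_zero
    have hzk : z = 2 * k := by
      have h' := hk
      rw [div_eq_iff (two_ne_zero' ℂ)] at h'
      exact mul_left_cancel₀ hpi (by linear_combination h')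
    have hk0 : k ≠ 0 := by rintro rfl; simp at hzk; exact h0 hzk
    rcases lt_or_gt_of_ne hk0 with hlt | hgt
    · have hG : Gammaℝ z = 0 := by
        rw [Gammaℝ_eq_zero_iff]
        have hcast : (((-k).toNat : ℕ) : ℂ) = -(k : ℂ) := by
          exact_mod_cast congrArg (Int.cast : ℤ → ℂ) (Int.toNat_of_nonneg (by omega : (0:ℤ) ≤ -k))
        exact ⟨(-k).toNat, by rw [hzk, hcast]; try ring⟩
      rw [hG]; simp [hsin]
    · have hG : Gammaℝ (-z) = 0 := by
        rw [Gammaℝ_eq_zero_iff]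
        have hcast : ((k.toNat : ℕ) : ℂ) = (k : ℂ) := by
          exact_mod_cast congrArg (Int.cast : ℤ → ℂ) (Int.toNat_of_nonneg (by omega : (0:ℤ) ≤ k))
        exact ⟨k.toNat, by rw [hzk, hcast]; try ring⟩
      rw [hG]; simp [hsin]
  · -- generic case
    have hpi : (Real.pi : ℂ) ≠ 0 := ofReal_ne_zero.mpr Real.pi_ne_zero
    have hR1 : Gammaℝ z ≠ 0 := by
      rw [Ne, Gammaℝ_eq_zero_iff]
      rintro ⟨n, rfl⟩
      exact hsin (Complex.sin_eq_zero_iff.mpr ⟨-n, by push_cast; ring⟩)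
    have hR2 : Gammaℝ (-z) ≠ 0 := by
      rw [Ne, Gammaℝ_eq_zero_iff]
      rintro ⟨n, hn⟩
      have : z = 2 * n := by linear_combination -hn
      exact hsin (Complex.sin_eq_zero_iff.mpr ⟨n, by rw [this]; push_cast; ring⟩)
    have hR3 : Gammaℝ (1 - z) ≠ 0 := by
      rw [Ne, Gammaℝ_eq_zero_iff]
      rintro ⟨n, hn⟩
      have : z = 2 * n + 1 := by linear_combination -hn
      exact hcos (Complex.cos_eq_zero_iff.mpr ⟨n, by rw [this]; push_cast; ring⟩)
    have hR4 : Gammaℝ (1 + z) ≠ 0 := by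
      rw [Ne, Gammaℝ_eq_zero_iff]
      rintro ⟨n, hn⟩
      have : z = -(2 * n + 1) := by linear_combination hn
      exact hcos (Complex.cos_eq_zero_iff.mpr ⟨-(n+1), by rw [this]; push_cast; ring⟩)
    have key1 : Gammaℝ (1 - z) * Gammaℝ (1 + z) * Complex.cos ((Real.pi : ℂ) * z / 2) = 1 := by
      rw [Gammaℝ_one_sub_mul_Gammaℝ_one_add, inv_mul_cancel₀ hcos]
    have key2 : Gammaℝ z * Gammaℝ (-z) * (-z) * Complex.sin ((Real.pi : ℂ) * z / 2)
        = 2 * (Real.pi : ℂ) := by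
      have h2 := Gammaℝ_one_sub_mul_Gammaℝ_one_add (z - 1)
      have hc : Complex.cos ((Real.pi : ℂ) * (z - 1) / 2) = Complex.sin ((Real.pi : ℂ) * z / 2) := by
        rw [show (Real.pi : ℂ) * (z - 1) / 2 = (Real.pi : ℂ) * z / 2 - (Real.pi : ℂ) / 2 by ring,
          Complex.cos_sub_pi_div_two]
      rw [hc] at h2
      have ha : Gammaℝ (1 - (z - 1)) = Gammaℝ (-z) * (-z) / 2 / (Real.pi : ℂ) := by
        rw [show (1 : ℂ) - (z - 1) = -z + 2 by ring, Gammaℝ_add_two hneg]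
      rw [ha, show (1 : ℂ) + (z - 1) = z by ring] at h2
      field_simp at h2
      rw [show z * (Real.pi : ℂ) / 2 = (Real.pi : ℂ) * z / 2 by ring, eq_div_iff hsin] at h2
      linear_combination h2
    field_simp [hcos]
    linear_combination (2 * (Real.pi : ℂ) * key1) - key2

theorem stmt_8 (s : ℂ) (α : ℝ)
    (hs : s ∉ ({-1, 0, 1} : Set ℂ))
    (hsa : s + Complex.I * α ∉ ({-1, 0, 1} : Set ℂ))
    (hz : riemannZeta (-s) ≠ 0)
    (hD : -2 * (Real.pi : ℂ) * Complex.I * Complex.tanh ((Real.pi : ℂ) * α / 2) *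
            riemannZeta (s + Complex.I * α) * riemannZeta (-s - Complex.I * α) +
          (s + Complex.I * α) * riemannZeta (1 + s + Complex.I * α) *
            riemannZeta (1 - s - Complex.I * α) ≠ 0) :
    riemannZeta s =
      s * riemannZeta (1 - s) * riemannZeta (1 + s) *
          (Complex.I * (s + Complex.I * α) * Complex.tanh ((Real.pi : ℂ) * α / 2) *
              riemannZeta (1 - s - Complex.I * α) * riemannZeta (1 + s + Complex.I * α) +
            2 * (Real.pi : ℂ) * riemannZeta (s + Complex.I * α) *
              riemannZeta (-s - Complex.I * α)) /
        (2 * (Real.pi : ℂ) * riemannZeta (-s) *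
          (-2 * (Real.pi : ℂ) * Complex.I * Complex.tanh ((Real.pi : ℂ) * α / 2) *
              riemannZeta (s + Complex.I * α) * riemannZeta (-s - Complex.I * α) +
            (s + Complex.I * α) * riemannZeta (1 + s + Complex.I * α) *
              riemannZeta (1 - s - Complex.I * α))) := by
  simp only [Set.mem_insert_iff, Set.mem_singleton_iff, not_or] at hs hsa
  obtain ⟨hm1, h0, h1⟩ := hs
  obtain ⟨hm1', h0', h1'⟩ := hsa
  have hpi : (Real.pi : ℂ) ≠ 0 := ofReal_ne_zero.mpr Real.pi_ne_zero
  have hch : Complex.cosh ((Real.pi : ℂ) * α / 2) ≠ 0 := by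
    rw [show ((Real.pi : ℂ) * α / 2) = ((Real.pi * α / 2 : ℝ) : ℂ) by push_cast; ring,
      ← Complex.ofReal_cosh]
    exact_mod_cast (Real.cosh_pos _).ne'
  have hsh : Complex.sinh ((Real.pi : ℂ) * α / 2) =
      Complex.tanh ((Real.pi : ℂ) * α / 2) * Complex.cosh ((Real.pi : ℂ) * α / 2) := by
    rw [Complex.tanh_eq_sinh_div_cosh, div_mul_cancel₀ _ hch]
  have e1 := zetaE s h0 h1 hm1
  have e2 := zetaE (s + Complex.I * α) h0' h1' hm1'
  rw [show (Real.pi : ℂ) * (s + Complex.I * α) / 2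
        = (Real.pi : ℂ) * s / 2 + ((Real.pi : ℂ) * α / 2) * Complex.I by ring,
    Complex.cos_add, Complex.sin_add, Complex.cos_mul_I, Complex.sin_mul_I, hsh,
    show -(s + Complex.I * ↑α) = -s - Complex.I * ↑α by ring,
    show (1 : ℂ) - (s + Complex.I * ↑α) = 1 - s - Complex.I * ↑α by ring,
    show (1 : ℂ) + (s + Complex.I * ↑α) = 1 + s + Complex.I * ↑α by ring] at e2
  have pyth := Complex.sin_sq_add_cos_sq ((Real.pi : ℂ) * s / 2)
  set A := riemannZeta s
  set B := riemannZeta (-s)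
  set C := riemannZeta (1 - s)
  set Dz := riemannZeta (1 + s)
  set P := riemannZeta (s + Complex.I * α)
  set Q := riemannZeta (-s - Complex.I * α)
  set R := riemannZeta (1 - s - Complex.I * α)
  set T := riemannZeta (1 + s + Complex.I * α)
  set co := Complex.cos ((Real.pi : ℂ) * s / 2)
  set si := Complex.sin ((Real.pi : ℂ) * s / 2)
  set ch := Complex.cosh ((Real.pi : ℂ) * α / 2)
  set τ := Complex.tanh ((Real.pi : ℂ) * α / 2)
  set s' := s + Complex.I * (α : ℂ)
  have hden : 2 * (Real.pi : ℂ) * B *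
      (-2 * (Real.pi : ℂ) * Complex.I * τ * P * Q + s' * T * R) ≠ 0 :=
    mul_ne_zero (mul_ne_zero (mul_ne_zero two_ne_zero hpi) hz) hD
  rw [eq_div_iff hden]
  apply mul_left_cancel₀ hch
  linear_combination
    (-(si * (ch * (2 * (Real.pi : ℂ) * P * Q) -
          Complex.I * (τ * ch) * (-s' * R * T)) +
        co * (Complex.I * (τ * ch) * (2 * (Real.pi : ℂ) * P * Q) +
          ch * (-s' * R * T)))) * e1 +
    (si * (2 * (Real.pi : ℂ) * A * B) + co * (-s * C * Dz)) * e2 +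
    ((2 * (Real.pi : ℂ) * A * B) * (Complex.I * (τ * ch) * (2 * (Real.pi : ℂ) * P * Q) +
        ch * (-s' * R * T)) -
      (-s * C * Dz) * (ch * (2 * (Real.pi : ℂ) * P * Q) -
        Complex.I * (τ * ch) * (-s' * R * T))) * pyth
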